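/- Let E be a locally convex Hausdorff topological vector space over ℂ in which every bounded subset is relatively compact in the weak topology σ(E,E′) (i.e. E is semi-reflexive). Then every power bounded continuous linear operator T : E → E is mean ergodic. -/

import Mathlib

open Filter Topology

/-- The `n`-th Cesàro mean of `T` applied to `x`: `(1/n) ∑_{m=1}^{n} Tᵐ x`. -/
noncomputable def cesaroMean {E : Type*} [AddCommGroup E] [Module ℂ E] [TopologicalSpace E]
    (T : E →L[ℂ] E) (n : ℕ) (x : E) : E :=
  (n : ℂ)⁻¹ • ∑ m ∈ Finset.Icc 1 n, (T ^ m) x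

open Bornology Uniformity Pointwise
set_option linter.unusedSectionVars false

section Aux


variable {E : Type*} [AddCommGroup E] [Module ℂ E] [Module ℝ E] [IsScalarTower ℝ ℂ E]
    [UniformSpace E] [IsUniformAddGroup E] [ContinuousSMul ℂ E]
    [LocallyConvexSpace ℝ E]


/-- The Cesàro mean as a continuous linear map. -/
noncomputable def cesaroCLM (T : E →L[ℂ] E) (n : ℕ) : E →L[ℂ] E :=
  (n : ℂ)⁻¹ • ∑ m ∈ Finset.Icc 1 n, T ^ m

lemma cesaroMean_eq (T : E →L[ℂ] E) (n : ℕ) (x : E) :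
    cesaroMean T n x = cesaroCLM T n x := by
  simp [cesaroMean, cesaroCLM, ContinuousLinearMap.sum_apply]

lemma sum_Icc_shift {M : Type*} [AddCommGroup M] (g : ℕ → M) (n : ℕ) :
    ∑ m ∈ Finset.Icc 1 n, g (m + 1) = ∑ m ∈ Finset.Icc 1 n, g m + g (n + 1) - g 1 := by
  induction n with
  | zero => simp
  | succ n ih =>
    rw [Finset.sum_Icc_succ_top (by omega), Finset.sum_Icc_succ_top (by omega), ih]
    abel

lemma sum_Icc_telescope {M : Type*} [AddCommGroup M] (f : ℕ → M) (n : ℕ) :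
    ∑ m ∈ Finset.Icc 1 n, (f m - f (m + 1)) = f 1 - f (n + 1) := by
  induction n with
  | zero => simp
  | succ n ih =>
    rw [Finset.sum_Icc_succ_top (by omega), ih]
    abel

lemma equicontinuous_nhds {ι : Type*} (F : ι → E →L[ℂ] E)
    (h : Equicontinuous fun i => ⇑(F i)) :
    ∀ U ∈ 𝓝 (0 : E), ∃ V ∈ 𝓝 (0 : E), ∀ i, ∀ v ∈ V, F i v ∈ U := by
  intro U hU
  have hW : ((fun p : E × E => p.2 - p.1) ⁻¹' U) ∈ 𝓤 E := by
    rw [uniformity_eq_comap_nhds_zero]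
    exact preimage_mem_comap hU
  refine ⟨_, h 0 _ hW, fun i v hv => ?_⟩
  simpa using hv i

lemma equicontinuousAt_zero_of_nhds {ι : Type*} (F : ι → E →L[ℂ] E)
    (h : ∀ U ∈ 𝓝 (0 : E), ∃ V ∈ 𝓝 (0 : E), ∀ i, ∀ v ∈ V, F i v ∈ U) :
    EquicontinuousAt (fun i => ⇑(F i)) 0 := by
  intro W hW
  rw [uniformity_eq_comap_nhds_zero, mem_comap] at hW
  obtain ⟨U, hU, hUW⟩ := hW
  obtain ⟨V, hV, hFV⟩ := h U hU
  filter_upwards [hV] with v hv i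
  exact hUW (by simpa using hFV i v hv)

lemma orbit_bounded (T : E →L[ℂ] E)
    (hpow : Equicontinuous fun m : ℕ => ⇑(T ^ (m + 1))) (x : E) :
    IsVonNBounded ℂ (Set.range fun m : ℕ => (T ^ (m + 1)) x) := by
  intro U hU
  obtain ⟨V, hV, hTV⟩ := equicontinuous_nhds _ hpow U hU
  have habs : Absorbs ℂ V {x} := isVonNBounded_singleton x hV
  refine Filter.Eventually.mono habs.eventually fun c hc => ?_
  rintro _ ⟨m, rfl⟩
  obtain ⟨v, hv, hvx⟩ := hc (Set.mem_singleton x)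
  refine ⟨(T ^ (m + 1)) v, hTV _ v hv, ?_⟩
  rw [← hvx]
  exact (map_smul _ c v).symm

lemma isVonNBounded_convexHull {s : Set E} (hs : IsVonNBounded ℂ s) :
    IsVonNBounded ℂ (convexHull ℝ s) := by
  intro U hU
  obtain ⟨N, hN, hNconv, hNU⟩ :=
    (locallyConvexSpace_iff_exists_convex_subset_zero ℝ E).mp ‹_› U hU
  refine Filter.Eventually.mono (hs hN).eventually fun c hc => ?_
  have hlin : IsLinearMap ℝ fun z : E => c • z :=
    ⟨fun a b => smul_add c a b, fun r z => (smul_comm r c z).symm⟩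
  have hcN : Convex ℝ (c • N) := by
    rw [show c • N = (fun z : E => c • z) '' N from rfl]
    exact hNconv.is_linear_image hlin
  exact (convexHull_min hc hcN).trans (Set.smul_set_mono hNU)

lemma natCast_inv_smul (k : ℕ) (v : E) : ((k : ℕ) : ℂ)⁻¹ • v = ((k : ℕ) : ℝ)⁻¹ • v := by
  rw [← algebraMap_smul ℂ ((k : ℕ) : ℝ)⁻¹ v, map_inv₀, map_natCast]

lemma cesaroMean_mem_convex (T : E →L[ℂ] E) {N : Set E} (hN : Convex ℝ N) {v : E} (n : ℕ)
    (hmem : ∀ m, (T ^ (m + 1)) v ∈ N) : cesaroMean T (n + 1) v ∈ N := by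
  have key : cesaroMean T (n + 1) v
      = ∑ m ∈ Finset.Icc 1 (n + 1), (((n + 1 : ℕ) : ℝ))⁻¹ • (T ^ m) v := by
    rw [cesaroMean, show ((n + 1 : ℕ) : ℂ) = (((n + 1 : ℕ) : ℕ) : ℂ) by norm_num,
      natCast_inv_smul, Finset.smul_sum]
  rw [key]
  refine hN.sum_mem (fun m _ => by positivity) ?_ ?_
  · rw [Finset.sum_const, Nat.card_Icc]
    simp only [Nat.add_sub_cancel, nsmul_eq_mul]
    rw [mul_inv_cancel₀]
    positivity
  · intro m hm
    simp only [Finset.mem_Icc] at hm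
    have : m - 1 + 1 = m := by omega
    simpa [this] using hmem (m - 1)


lemma pow_apply_fixed (T : E →L[ℂ] E) {v : E} (hv : T v = v) (m : ℕ) : (T ^ m) v = v := by
  induction m with
  | zero => simp
  | succ m ih => rw [pow_succ, ContinuousLinearMap.mul_apply, hv, ih]

lemma cesaroMean_of_fixed (T : E →L[ℂ] E) {v : E} (hv : T v = v) (n : ℕ) :
    cesaroMean T (n + 1) v = v := by
  rw [cesaroMean]
  have : ∀ m ∈ Finset.Icc 1 (n + 1), (T ^ m) v = v := fun m _ => pow_apply_fixed T hv m
  rw [Finset.sum_congr rfl this, Finset.sum_const, Nat.card_Icc, Nat.add_sub_cancel,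
    ← Nat.cast_smul_eq_nsmul ℂ, inv_smul_smul₀ (by exact_mod_cast Nat.succ_ne_zero n)]

lemma tendsto_natCast_inv_zero :
    Tendsto (fun n : ℕ => ((n + 1 : ℕ) : ℂ)⁻¹) atTop (𝓝 0) := by
  rw [tendsto_zero_iff_norm_tendsto_zero]
  have h : Tendsto (fun n : ℕ => ((n + 1 : ℕ) : ℝ)⁻¹) atTop (𝓝 0) :=
    tendsto_inv_atTop_nhds_zero_nat.comp (tendsto_add_atTop_nat 1)
  refine h.congr fun n => ?_
  rw [norm_inv, Complex.norm_natCast]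

lemma cesaroMean_sub_eq (T : E →L[ℂ] E) (u : E) (n : ℕ) :
    cesaroMean T (n + 1) (u - T u)
      = ((n + 1 : ℕ) : ℂ)⁻¹ • T u - ((n + 1 : ℕ) : ℂ)⁻¹ • (T ^ (n + 2)) u := by
  rw [cesaroMean]
  have h1 : ∀ m ∈ Finset.Icc 1 (n + 1), (T ^ m) (u - T u) = (T ^ m) u - (T ^ (m + 1)) u := by
    intro m _
    rw [map_sub, pow_succ, ContinuousLinearMap.mul_apply]
  rw [Finset.sum_congr rfl h1, sum_Icc_telescope (fun m => (T ^ m) u) (n + 1)]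
  rw [smul_sub, pow_one]

lemma cesaroMean_tendsto_zero_of_sub (T : E →L[ℂ] E)
    (hpow : Equicontinuous fun m : ℕ => ⇑(T ^ (m + 1))) (u : E) :
    Tendsto (fun n : ℕ => cesaroMean T (n + 1) (u - T u)) atTop (𝓝 0) := by
  have h1 : Tendsto (fun n : ℕ => ((n + 1 : ℕ) : ℂ)⁻¹ • T u) atTop (𝓝 (0 : E)) := by
    simpa using tendsto_natCast_inv_zero.smul_const (T u)
  have h2 : Tendsto (fun n : ℕ => ((n + 1 : ℕ) : ℂ)⁻¹ • (T ^ (n + 2)) u) atTop (𝓝 (0 : E)) := by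
    exact (orbit_bounded T hpow u).smul_tendsto_zero
      (Eventually.of_forall fun n => ⟨n + 1, rfl⟩) tendsto_natCast_inv_zero
  have := h1.sub h2
  rw [sub_zero] at this
  exact this.congr fun n => (cesaroMean_sub_eq T u n).symm

lemma cesaro_equicontinuous (T : E →L[ℂ] E)
    (hpow : Equicontinuous fun m : ℕ => ⇑(T ^ (m + 1))) :
    Equicontinuous fun n : ℕ => ⇑(cesaroCLM T (n + 1)) := by
  have h0 : EquicontinuousAt (fun n : ℕ => ⇑(cesaroCLM T (n + 1))) 0 := by
    apply equicontinuousAt_zero_of_nhds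
    intro U hU
    obtain ⟨N, hN, hNconv, hNU⟩ :=
      (locallyConvexSpace_iff_exists_convex_subset_zero ℝ E).mp ‹_› U hU
    obtain ⟨V, hV, hTV⟩ := equicontinuous_nhds _ hpow N hN
    refine ⟨V, hV, fun n v hv => hNU ?_⟩
    rw [← cesaroMean_eq]
    exact cesaroMean_mem_convex T hNconv n fun m => hTV m v hv
  exact (uniformEquicontinuous_of_equicontinuousAt_zero
    (fun n : ℕ => cesaroCLM T (n + 1)) h0).equicontinuous

lemma cesaro_apply_succ (T : E →L[ℂ] E) (x : E) (n : ℕ) :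
    T (cesaroMean T (n + 1) x)
      = cesaroMean T (n + 1) x + ((n + 1 : ℕ) : ℂ)⁻¹ • ((T ^ (n + 2)) x - T x) := by
  simp only [cesaroMean, map_smul, map_sum]
  have h1 : ∀ m ∈ Finset.Icc 1 (n + 1), T ((T ^ m) x) = (T ^ (m + 1)) x := by
    intro m _
    rw [pow_succ', ContinuousLinearMap.mul_apply]
  rw [Finset.sum_congr rfl h1, sum_Icc_shift (fun m => (T ^ m) x) (n + 1), pow_one]
  rw [sub_eq_add_neg, smul_add, smul_add, smul_neg,
    show n + 1 + 1 = n + 2 from rfl, smul_sub]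
  abel

end Aux


/-- Every power bounded operator on a semi-reflexive locally convex Hausdorff space is
mean ergodic. -/
theorem stmt3 {E : Type*} [AddCommGroup E] [Module ℂ E] [Module ℝ E] [IsScalarTower ℝ ℂ E]
    [UniformSpace E] [IsUniformAddGroup E] [ContinuousSMul ℂ E]
    [LocallyConvexSpace ℝ E] [T2Space E]
    -- `E` is semi-reflexive: every bounded subset of `E` is relatively compact in the weak
    -- topology `σ(E,E′)`
    (hsemireflexive : ∀ s : Set E, Bornology.IsVonNBounded ℂ s →
      IsCompact (closure (toWeakSpace ℂ E '' s)))
    (T : E →L[ℂ] E)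
    -- `T` is power bounded: the family `{Tᵐ : m ≥ 1}` is equicontinuous
    (hpow : Equicontinuous fun m : ℕ => ⇑(T ^ (m + 1))) :
    -- `T` is mean ergodic
    ∃ P : E →L[ℂ] E, ∀ x : E,
      Tendsto (fun n : ℕ => cesaroMean T (n + 1) x) atTop (𝓝 (P x)) := by
  classical
  have hsmulR : ContinuousSMul ℝ E := IsScalarTower.continuousSMul ℂ
  -- the weak topology is Hausdorff
  have hsep : ∀ z : E, z ≠ 0 → ∃ f : E →L[ℂ] ℂ, f z ≠ 0 := by
    intro z hz
    obtain ⟨f, u, hs, hx⟩ := RCLike.geometric_hahn_banach_closed_point (𝕜 := ℂ)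
      (convex_singleton (0 : E)) isClosed_singleton (by simpa using hz)
    have h0 : (0 : ℝ) < u := by simpa using hs 0 rfl
    refine ⟨f, fun hfz => ?_⟩
    rw [hfz] at hx
    simp at hx
    linarith
  have hinj : Function.Injective ⇑(topDualPairing ℂ E).flip := by
    rw [injective_iff_map_eq_zero]
    intro z hz0
    by_contra hz
    obtain ⟨f, hf⟩ := hsep z hz
    apply hf
    calc f z = (topDualPairing ℂ E).flip z f := rfl
    _ = 0 := by rw [hz0]; rfl
  have hT2w : T2Space (WeakSpace ℂ E) := (WeakBilin.isEmbedding hinj).t2Space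
  set W := toWeakSpace ℂ E with hW
  -- the submodule of "coboundaries"
  set D : Submodule ℂ E := LinearMap.range ((LinearMap.id : E →ₗ[ℂ] E) - (T : E →ₗ[ℂ] E))
    with hD
  have hDmem : ∀ u : E, u - T u ∈ D := fun u => ⟨u, by simp⟩
  have hconvD : Convex ℝ (D : Set E) := by
    intro p hp q hq a b _ _ _
    refine D.add_mem ?_ ?_
    · rw [← algebraMap_smul ℂ a p]; exact D.smul_mem _ hp
    · rw [← algebraMap_smul ℂ b q]; exact D.smul_mem _ hq
  -- convergence to zero on the closure of D
  have hequi := cesaro_equicontinuous T hpow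
  have hDzero : ∀ w ∈ (D : Set E), Tendsto (fun n : ℕ => cesaroCLM T (n + 1) w) atTop
      (𝓝 (0 : E)) := by
    rintro w ⟨u, rfl⟩
    have : ((LinearMap.id : E →ₗ[ℂ] E) - (T : E →ₗ[ℂ] E)) u = u - T u := by simp
    rw [this]
    exact (cesaroMean_tendsto_zero_of_sub T hpow u).congr
      fun n => cesaroMean_eq T (n + 1) (u - T u)
  -- pointwise limits exist
  have hlim : ∀ x : E, ∃ y : E,
      Tendsto (fun n : ℕ => cesaroMean T (n + 1) x) atTop (𝓝 y) := by
    intro x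
    have horb := orbit_bounded T hpow x
    have hch := isVonNBounded_convexHull horb
    have hK := hsemireflexive _ hch
    set a : ℕ → WeakSpace ℂ E := fun n => W (cesaroMean T (n + 1) x) with ha_def
    have haK : ∀ n, a n ∈ closure (W '' (convexHull ℝ
        (Set.range fun m : ℕ => (T ^ (m + 1)) x))) := by
      intro n
      refine subset_closure ⟨cesaroMean T (n + 1) x, ?_, rfl⟩
      exact cesaroMean_mem_convex T (convex_convexHull ℝ _) n
        fun m => subset_convexHull ℝ _ ⟨m, rfl⟩
    have hmapK : map a atTop ≤ 𝓟 (closure (W '' (convexHull ℝ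
        (Set.range fun m : ℕ => (T ^ (m + 1)) x)))) :=
      le_principal_iff.mpr (mem_map.mpr (Eventually.of_forall haK))
    obtain ⟨y, hyK, hy⟩ := hK.exists_clusterPt hmapK
    have hy' : MapClusterPt y atTop a := hy
    obtain ⟨Ufil, hUle, hUy⟩ := mapClusterPt_iff_ultrafilter.mp hy'
    set y₀ := W.symm y with hy₀def
    have hWy₀ : W y₀ = y := W.apply_symm_apply y
    -- the cluster point is a fixed point of T
    have hc3 : Tendsto (fun n : ℕ => ((n + 1 : ℕ) : ℂ)⁻¹ • ((T ^ (n + 2)) x - T x)) atTop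
        (𝓝 (0 : E)) := by
      have h1 : Tendsto (fun n : ℕ => ((n + 1 : ℕ) : ℂ)⁻¹ • (T ^ (n + 2)) x) atTop
          (𝓝 (0 : E)) :=
        (orbit_bounded T hpow x).smul_tendsto_zero
          (Eventually.of_forall fun n => ⟨n + 1, rfl⟩) tendsto_natCast_inv_zero
      have h2 : Tendsto (fun n : ℕ => ((n + 1 : ℕ) : ℂ)⁻¹ • T x) atTop (𝓝 (0 : E)) := by
        simpa using tendsto_natCast_inv_zero.smul_const (T x)
      have := h1.sub h2
      rw [sub_zero] at this
      exact this.congr fun n => (smul_sub _ _ _).symm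
    have hyfix : T y₀ = y₀ := by
      have h1 : Tendsto (fun n => WeakSpace.map T (a n)) Ufil (𝓝 (WeakSpace.map T y)) :=
        ((WeakSpace.map T).continuous.tendsto y).comp hUy
      have heq : ∀ n, WeakSpace.map T (a n)
          = a n + (toWeakSpaceCLM ℂ E) (((n + 1 : ℕ) : ℂ)⁻¹ • ((T ^ (n + 2)) x - T x)) := by
        intro n
        calc WeakSpace.map T (a n) = W (T (cesaroMean T (n + 1) x)) := rfl
        _ = W (cesaroMean T (n + 1) x
              + ((n + 1 : ℕ) : ℂ)⁻¹ • ((T ^ (n + 2)) x - T x)) := by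
            rw [cesaro_apply_succ]
        _ = _ := map_add W _ _
      have h2 : Tendsto (fun n => a n
          + (toWeakSpaceCLM ℂ E) (((n + 1 : ℕ) : ℂ)⁻¹ • ((T ^ (n + 2)) x - T x))) Ufil
          (𝓝 (y + 0)) := by
        refine hUy.add ?_
        have := ((toWeakSpaceCLM ℂ E).continuous.tendsto 0).comp hc3
        rw [map_zero] at this
        exact this.mono_left hUle
      have hmapTy : WeakSpace.map T y = y := by
        have := tendsto_nhds_unique h1 ((h2.congr fun n => (heq n).symm))
        rw [add_zero] at this
        exact this
      apply W.injective
      calc W (T y₀) = WeakSpace.map T (W y₀) := rfl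
      _ = WeakSpace.map T y := by rw [hWy₀]
      _ = y := hmapTy
      _ = W y₀ := hWy₀.symm
    -- x - y₀ lies in the closure of D
    have hxA : ∀ n, x - cesaroMean T (n + 1) x ∈ D := by
      intro n
      have h1 : ∀ m : ℕ, x - (T ^ m) x ∈ D := by
        intro m
        induction m with
        | zero => simpa using D.zero_mem
        | succ m ih =>
          have : x - (T ^ (m + 1)) x
              = (x - (T ^ m) x) + ((T ^ m) x - T ((T ^ m) x)) := by
            rw [pow_succ', ContinuousLinearMap.mul_apply]; abel
          rw [this]
          exact D.add_mem ih (hDmem _)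
      have key : x - cesaroMean T (n + 1) x
          = ((n + 1 : ℕ) : ℂ)⁻¹ • ∑ m ∈ Finset.Icc 1 (n + 1), (x - (T ^ m) x) := by
        rw [Finset.sum_sub_distrib, smul_sub, cesaroMean, Finset.sum_const, Nat.card_Icc,
          Nat.add_sub_cancel, ← Nat.cast_smul_eq_nsmul ℂ,
          inv_smul_smul₀ (by exact_mod_cast Nat.succ_ne_zero n)]
      rw [key]
      exact D.smul_mem _ (Submodule.sum_mem D fun m _ => h1 m)
    have hzD : x - y₀ ∈ closure (D : Set E) := by
      have hmemD : ∀ n, W x - a n ∈ W '' (D : Set E) := fun n =>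
        ⟨x - cesaroMean T (n + 1) x, hxA n, map_sub W _ _⟩
      have htend : Tendsto (fun n => W x - a n) Ufil (𝓝 (W x - y)) :=
        tendsto_const_nhds.sub hUy
      have hWD : W x - y ∈ closure (W '' (D : Set E)) :=
        mem_closure_of_tendsto htend (Eventually.of_forall hmemD)
      rw [← hconvD.toWeakSpace_closure (𝕜 := ℂ)] at hWD
      obtain ⟨z, hzc, hzeq⟩ := hWD
      have : x - y₀ = z := by
        apply W.injective
        rw [map_sub, hWy₀, hzeq]
      rw [this]
      exact hzc
    -- conclude convergence
    have hzlim : Tendsto (fun n : ℕ => cesaroCLM T (n + 1) (x - y₀)) atTop (𝓝 (0 : E)) :=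
      (hequi (x - y₀)).tendsto_of_mem_closure tendsto_const_nhds hDzero hzD
    refine ⟨y₀, ?_⟩
    have hdecomp : ∀ n, cesaroMean T (n + 1) x = y₀ + cesaroCLM T (n + 1) (x - y₀) := by
      intro n
      rw [map_sub, ← cesaroMean_eq, ← cesaroMean_eq, cesaroMean_of_fixed T hyfix n]
      abel
    have h := (tendsto_const_nhds : Tendsto (fun _ : ℕ => y₀) atTop (𝓝 y₀)).add hzlim
    rw [add_zero] at h
    exact h.congr fun n => (hdecomp n).symm
  -- assemble the limit operator
  choose Pf hPf using hlim
  have hPadd : ∀ x y : E, Pf (x + y) = Pf x + Pf y := by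
    intro x y
    have hxy : ∀ n : ℕ, cesaroMean T (n + 1) (x + y)
        = cesaroMean T (n + 1) x + cesaroMean T (n + 1) y := by
      intro n
      rw [cesaroMean_eq, cesaroMean_eq, cesaroMean_eq, map_add]
    exact tendsto_nhds_unique (hPf (x + y))
      (((hPf x).add (hPf y)).congr fun n => (hxy n).symm)
  have hPsmul : ∀ (c : ℂ) (x : E), Pf (c • x) = c • Pf x := by
    intro c x
    have hcx : ∀ n : ℕ, cesaroMean T (n + 1) (c • x) = c • cesaroMean T (n + 1) x := by
      intro n
      rw [cesaroMean_eq, cesaroMean_eq, map_smul]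
    exact tendsto_nhds_unique (hPf (c • x))
      (((hPf x).const_smul c).congr fun n => (hcx n).symm)
  have hcont : Continuous Pf := by
    refine Filter.Tendsto.continuous_of_equicontinuous (l := atTop) ?_ hequi
    rw [tendsto_pi_nhds]
    intro x
    exact (hPf x).congr fun n => cesaroMean_eq T (n + 1) x
  exact ⟨{ toFun := Pf, map_add' := hPadd, map_smul' := hPsmul, cont := hcont }, hPf⟩
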